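/- Long-term resilience outage probability under negative drift (Theorem 2, second part): If (Z i)_{i≥1} are independent identically distributed integrable real random variables with E[Z] < 0, then for every initial budget b0 > 0 and every threshold 0 < b_ε ≤ b0, the resilience outage probability converges and lim_{t→∞} α(t) = lim_{t→∞} ψ(t) = P(∃ t ≥ 1, S(t) ≥ b0), the probability of ultimate ruin. -/

import Mathlib

open MeasureTheory Filter

/-- Theorem 2 (second part): under negative drift (`E[Z] < 0`), the resilience outage
probability converges, and its limit coincides with the limit of the ruin probability,
namely the probability of ultimate ruin `P(∃ t ≥ 1, S t ≥ b0)`. -/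
theorem long_term_resilience_outage_neg_drift
    {Ω : Type*} [MeasurableSpace Ω] (P : Measure Ω) [IsProbabilityMeasure P]
    (Z : ℕ → Ω → ℝ) (hZmeas : ∀ i, Measurable (Z i))
    (hindep : ProbabilityTheory.iIndepFun Z P)
    (hident : ∀ i, ProbabilityTheory.IdentDistrib (Z i) (Z 1) P P)
    (hint : Integrable (Z 1) P)
    (hmean : ∫ ω, Z 1 ω ∂P < 0)
    (S : ℕ → Ω → ℝ) (hS : ∀ t ω, S t ω = ∑ i ∈ Finset.Icc 1 t, Z i ω)
    (b0 bε : ℝ) (hb0 : 0 < b0) (hbε : 0 < bε) (hbε' : bε ≤ b0)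
    (ψ : ℕ → ENNReal) (hψ : ∀ t, ψ t = P {ω | ∃ i, 1 ≤ i ∧ i ≤ t ∧ b0 ≤ S i ω})
    (α : ℕ → ENNReal)
    (hα : ∀ t, α t = 1 - P {ω | S t ω ≤ b0 - bε ∧ ∀ i, 1 ≤ i → i ≤ t → S i ω < b0}) :
    Tendsto α atTop (nhds (P {ω | ∃ t, 1 ≤ t ∧ b0 ≤ S t ω})) ∧
    Tendsto ψ atTop (nhds (P {ω | ∃ t, 1 ≤ t ∧ b0 ≤ S t ω})) := by
  have hSmeas : ∀ t, Measurable (S t) := by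
    intro t
    have : S t = fun ω => ∑ i ∈ Finset.Icc 1 t, Z i ω := funext (hS t)
    rw [this]
    exact Finset.measurable_sum _ fun i _ => hZmeas i
  set A : ℕ → Set Ω := fun t => {ω | ∃ i, 1 ≤ i ∧ i ≤ t ∧ b0 ≤ S i ω} with hA
  have hAmeas : ∀ t, MeasurableSet (A t) := by
    intro t
    have : A t = ⋃ i, ⋃ (_ : 1 ≤ i), ⋃ (_ : i ≤ t), {ω | b0 ≤ S i ω} := by
      ext ω; simp only [hA, Set.mem_iUnion, Set.mem_setOf_eq]; tauto
    rw [this]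
    exact MeasurableSet.iUnion fun i => MeasurableSet.iUnion fun _ =>
      MeasurableSet.iUnion fun _ => measurableSet_le measurable_const (hSmeas i)
  have hAmono : Monotone A := by
    intro s t hst ω ⟨i, h1, h2, h3⟩
    exact ⟨i, h1, h2.trans hst, h3⟩
  have hAun : (⋃ t, A t) = {ω | ∃ t, 1 ≤ t ∧ b0 ≤ S t ω} := by
    ext ω
    simp only [Set.mem_iUnion, hA, Set.mem_setOf_eq]
    constructor
    · rintro ⟨t, i, h1, _, h3⟩; exact ⟨i, h1, h3⟩
    · rintro ⟨t, h1, h3⟩; exact ⟨t, t, h1, le_refl t, h3⟩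
  -- ψ convergence
  have hψlim : Tendsto ψ atTop (nhds (P {ω | ∃ t, 1 ≤ t ∧ b0 ≤ S t ω})) := by
    have h := tendsto_measure_iUnion_atTop (μ := P) hAmono
    rw [hAun] at h
    have : ψ = P ∘ A := by funext t; exact hψ t
    rw [this]; exact h
  -- SLLN: a.s. S t → -∞
  have hae : ∀ᵐ ω ∂P, Tendsto (fun t => S t ω) atTop atBot := by
    set X : ℕ → Ω → ℝ := fun i => Z (i + 1) with hX
    have hintX : Integrable (X 0) P := hint
    have hpair : Pairwise (Function.onFun (ProbabilityTheory.IndepFun · · P) X) := by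
      intro i j hij
      exact hindep.indepFun (by omega)
    have hidX : ∀ i, ProbabilityTheory.IdentDistrib (X i) (X 0) P P :=
      fun i => (hident (i + 1)).trans (hident 1).symm
    have slln := ProbabilityTheory.strong_law_ae_real X hintX hpair hidX
    filter_upwards [slln] with ω hω
    have hsum : ∀ n, ∑ i ∈ Finset.range n, X i ω = S n ω := by
      intro n
      rw [hS, ← Finset.Ico_add_one_right_eq_Icc, Finset.sum_Ico_eq_sum_range]
      simp only [hX, Nat.add_sub_cancel]
      exact Finset.sum_congr rfl fun i _ => by rw [add_comm]
    have hmean' : ∫ ω, X 0 ω ∂P < 0 := hmean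
    have hω' : Tendsto (fun n : ℕ => S n ω / n) atTop (nhds (∫ ω, X 0 ω ∂P)) := by
      refine hω.congr fun n => by rw [hsum]
    have hmul : Tendsto (fun n : ℕ => (n : ℝ) * (S n ω / n)) atTop atBot :=
      Filter.Tendsto.atTop_mul_neg hmean' tendsto_natCast_atTop_atTop hω'
    refine hmul.congr' ?_
    filter_upwards [eventually_ge_atTop 1] with n hn
    have : (n : ℝ) ≠ 0 := by positivity
    field_simp
  -- P(S t > b0 - bε) → 0
  set D : ℕ → Set Ω := fun t => {ω | b0 - bε < S t ω} with hD
  have hDmeas : ∀ t, MeasurableSet (D t) :=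
    fun t => measurableSet_lt measurable_const (hSmeas t)
  have hDlim : Tendsto (fun t => P (D t)) atTop (nhds 0) := by
    set E : ℕ → Set Ω := fun t => ⋃ i, ⋃ (_ : t ≤ i), D i with hE
    have hEmeas : ∀ t, MeasurableSet (E t) :=
      fun t => MeasurableSet.iUnion fun i => MeasurableSet.iUnion fun _ => hDmeas i
    have hEanti : Antitone E := by
      intro s t hst ω hω
      simp only [hE, Set.mem_iUnion] at hω ⊢
      obtain ⟨i, h1, h2⟩ := hω
      exact ⟨i, hst.trans h1, h2⟩
    have hInull : P (⋂ t, E t) = 0 := by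
      refine measure_mono_null ?_ (ae_iff.mp hae)
      intro ω hω hcon
      simp only [Set.mem_iInter, hE, Set.mem_iUnion] at hω
      have := (tendsto_atBot.mp hcon) (b0 - bε)
      obtain ⟨N, hN⟩ := eventually_atTop.mp this
      obtain ⟨i, h1, h2⟩ := hω N
      exact absurd (hN i h1) (not_le.mpr h2)
    have hE0 : Tendsto (fun t => P (E t)) atTop (nhds 0) := by
      have := tendsto_measure_iInter_atTop (μ := P)
        (fun t => (hEmeas t).nullMeasurableSet) hEanti ⟨0, measure_ne_top P _⟩
      rw [hInull] at this
      exact this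
    refine tendsto_of_tendsto_of_tendsto_of_le_of_le tendsto_const_nhds hE0
      (fun t => zero_le) (fun t => measure_mono ?_)
    intro ω hω
    simp only [hE, Set.mem_iUnion]
    exact ⟨t, le_refl t, hω⟩
  -- α decomposition
  set B : ℕ → Set Ω := fun t => {ω | S t ω ≤ b0 - bε ∧ ∀ i, 1 ≤ i → i ≤ t → S i ω < b0}
    with hB
  have hBmeas : ∀ t, MeasurableSet (B t) := by
    intro t
    have : B t = {ω | S t ω ≤ b0 - bε} ∩
        ⋂ i, ⋂ (_ : 1 ≤ i), ⋂ (_ : i ≤ t), {ω | S i ω < b0} := by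
      ext ω; simp [hB, Set.mem_iInter]
    rw [this]
    exact (measurableSet_le (hSmeas t) measurable_const).inter
      (MeasurableSet.iInter fun i => MeasurableSet.iInter fun _ =>
        MeasurableSet.iInter fun _ => measurableSet_lt (hSmeas i) measurable_const)
  have hBcompl : ∀ t, (B t)ᶜ = A t ∪ (D t \ A t) := by
    intro t
    ext ω
    by_cases hAt : ω ∈ A t
    · simp only [Set.mem_compl_iff, Set.mem_union]
      refine ⟨fun _ => Or.inl hAt, fun _ hb => ?_⟩
      obtain ⟨i, h1, h2, h3⟩ := hAt
      exact absurd h3 (not_le.mpr (hb.2 i h1 h2))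
    · simp only [Set.mem_compl_iff, Set.mem_union, Set.mem_diff]
      constructor
      · intro h
        right
        refine ⟨?_, hAt⟩
        by_contra hlt
        have hlt' : S t ω ≤ b0 - bε := not_lt.mp hlt
        apply h
        refine ⟨hlt', fun i h1 h2 => ?_⟩
        by_contra hge
        exact hAt ⟨i, h1, h2, not_lt.mp hge⟩
      · rintro (h | ⟨h1, _⟩)
        · exact absurd h hAt
        · intro hb
          exact absurd h1 (not_lt.mpr hb.1)
  have hαeq : ∀ t, α t = ψ t + P (D t \ A t) := by
    intro t
    rw [hα t, hψ t]
    have h1 : P (B t)ᶜ = 1 - P (B t) := prob_compl_eq_one_sub (hBmeas t)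
    rw [← h1, hBcompl t]
    rw [measure_union (Set.disjoint_left.mpr fun ω hω1 hω2 => hω2.2 hω1)
      ((hDmeas t).diff (hAmeas t))]
  have hdiff0 : Tendsto (fun t => P (D t \ A t)) atTop (nhds 0) :=
    tendsto_of_tendsto_of_tendsto_of_le_of_le tendsto_const_nhds hDlim
      (fun t => zero_le) (fun t => measure_mono Set.diff_subset)
  refine ⟨?_, hψlim⟩
  have : Tendsto (fun t => ψ t + P (D t \ A t)) atTop
      (nhds (P {ω | ∃ t, 1 ≤ t ∧ b0 ≤ S t ω} + 0)) :=
    Tendsto.add hψlim hdiff0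
  rw [add_zero] at this
  exact this.congr fun t => (hαeq t).symm
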